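/- Let p ≥ 1 and let Ω, Ω' ⊂ ℝ² be compact convex sets of Hausdorff dimension 2 with diam(Ω) ≤ D and diam(Ω') ≤ D. Then |∫_{Ω'} dist(x, ∂Ω')^p dx − ∫_Ω dist(x, ∂Ω)^p dx| ≤ H²(Ω' ∖ Ω)·D^p + H²(Ω ∖ Ω')·D^p + H²(Ω ∩ Ω')·d_H(∂Ω, ∂Ω')·p·D^{p−1}, where d_H denotes the Hausdorff distance. In particular, if Ω_n → Ω in symmetric-difference measure and d_H(∂Ω_n, ∂Ω) → 0 with uniformly bounded diameters, then ∫_{Ω_n} dist(x, ∂Ω_n)^p dx → ∫_Ω dist(x, ∂Ω)^p dx. -/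

import Mathlib

open MeasureTheory Metric Set Filter
open scoped Topology ENNReal NNReal

/-- The plane `ℝ²`. -/
abbrev Plane := EuclideanSpace ℝ (Fin 2)

/-- The average-distance term `∫_Ω dist(x, ∂Ω)^p dx`. -/
noncomputable def distInt (p : ℝ) (Ω : Set Plane) : ℝ :=
  ∫ x in Ω, infDist x (frontier Ω) ^ p ∂μH[2]

/-- The perimeter `H¹(∂Ω)`. -/
noncomputable def perim (Ω : Set Plane) : ℝ :=
  (μH[1] (frontier Ω)).toReal

/-- The area `H²(Ω)`. -/
noncomputable def area (Ω : Set Plane) : ℝ :=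
  (μH[2] Ω).toReal

/-- The energy `E_{p,λ}(Ω) = ∫_Ω dist(x,∂Ω)^p dx + λ H¹(∂Ω)/H²(Ω)`. -/
noncomputable def energy (p lam : ℝ) (Ω : Set Plane) : ℝ :=
  distInt p Ω + lam * (perim Ω / area Ω)

/-- The admissible class `A`: compact, convex subsets of `ℝ²` of Hausdorff dimension 2. -/
def Adm (Ω : Set Plane) : Prop :=
  IsCompact Ω ∧ Convex ℝ Ω ∧ dimH Ω = 2


instance : IsFiniteMeasureOnCompacts (μH[2] : Measure Plane) := by
  have h : ((2:ℝ)) = ((Module.finrank ℝ Plane : ℕ) : ℝ) := by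
    simp [finrank_euclideanSpace_fin]
  rw [h]; infer_instance

lemma mvt_rpow {p D : ℝ} (hp : 1 ≤ p) (a b : ℝ) (ha0 : 0 ≤ a) (haD : a ≤ D)
    (hb0 : 0 ≤ b) (hbD : b ≤ D) : |b ^ p - a ^ p| ≤ p * D ^ (p - 1) * |b - a| := by
  have key : ∀ a b : ℝ, 0 ≤ a → b ≤ D → a ≤ b →
      b ^ p - a ^ p ≤ p * D ^ (p - 1) * (b - a) := by
    intro a b ha0 hbD hab
    rcases eq_or_lt_of_le hab with rfl | hab'
    · simp
    · obtain ⟨c, hc, hc'⟩ := exists_hasDerivAt_eq_slope (fun x : ℝ => x ^ p)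
        (fun x => p * x ^ (p - 1)) hab'
        (continuous_id.rpow_const fun x => Or.inr (by linarith)).continuousOn
        (fun x _ => Real.hasDerivAt_rpow_const (Or.inr hp))
      have hc0 : 0 ≤ c := le_trans ha0 hc.1.le
      have hcD : c ≤ D := le_trans hc.2.le hbD
      have heq : b ^ p - a ^ p = p * c ^ (p - 1) * (b - a) := by
        rw [hc', div_mul_cancel₀]
        exact sub_ne_zero.mpr hab'.ne'
      rw [heq]
      have h1 : c ^ (p - 1) ≤ D ^ (p - 1) := Real.rpow_le_rpow hc0 hcD (by linarith)
      have hp0 : (0:ℝ) ≤ p := by linarith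
      exact mul_le_mul_of_nonneg_right (mul_le_mul_of_nonneg_left h1 hp0) (by linarith)
  rcases le_total a b with hab | hab
  · rw [abs_of_nonneg (sub_nonneg.mpr (Real.rpow_le_rpow ha0 hab (by linarith))),
      abs_of_nonneg (sub_nonneg.mpr hab)]
    exact key a b ha0 hbD hab
  · rw [abs_sub_comm, abs_sub_comm b a,
      abs_of_nonneg (sub_nonneg.mpr (Real.rpow_le_rpow hb0 hab (by linarith))),
      abs_of_nonneg (sub_nonneg.mpr hab)]
    exact key b a hb0 haD hab

lemma adm_facts {Ω : Set Plane} (hc : IsCompact Ω) (hd : dimH Ω = 2) :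
    (frontier Ω).Nonempty ∧ frontier Ω ⊆ Ω := by
  have hne : Ω.Nonempty := by
    rcases Ω.eq_empty_or_nonempty with rfl | h
    · rw [dimH_empty] at hd; norm_num at hd
    · exact h
  refine ⟨?_, hc.isClosed.frontier_subset⟩
  rw [Set.nonempty_iff_ne_empty]
  intro h
  rcases frontier_eq_empty_iff.mp h with rfl | h2
  · exact hne.ne_empty rfl
  · rw [h2] at hc
    exact (not_compactSpace_iff.mpr inferInstance) (isCompact_univ_iff.mp hc)

lemma infDist_bdd {Ω : Set Plane} (hc : IsCompact Ω) (hd : dimH Ω = 2) {D : ℝ}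
    (hD : Metric.diam Ω ≤ D) {x : Plane} (hx : x ∈ Ω) : infDist x (frontier Ω) ≤ D := by
  obtain ⟨⟨y, hy⟩, hsub⟩ := adm_facts hc hd
  exact le_trans (infDist_le_dist_of_mem hy)
    (le_trans (dist_le_diam_of_mem hc.isBounded hx (hsub hy)) hD)

lemma part1 (p : ℝ) (hp : 1 ≤ p) (D : ℝ) (Ω Ω' : Set Plane)
    (hΩc : IsCompact Ω) (hΩd : dimH Ω = 2)
    (hΩ'c : IsCompact Ω') (hΩ'd : dimH Ω' = 2)
    (hΩD : Metric.diam Ω ≤ D) (hΩ'D : Metric.diam Ω' ≤ D) :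
    |distInt p Ω' - distInt p Ω| ≤
      (μH[2] (Ω' \ Ω)).toReal * D ^ p + (μH[2] (Ω \ Ω')).toReal * D ^ p +
        (μH[2] (Ω ∩ Ω')).toReal * hausdorffDist (frontier Ω) (frontier Ω') * p *
          D ^ (p - 1) := by
  set μ : Measure Plane := μH[2] with hμ
  set f : Plane → ℝ := fun x => infDist x (frontier Ω) ^ p with hf
  set g : Plane → ℝ := fun x => infDist x (frontier Ω') ^ p with hg
  set r : ℝ := hausdorffDist (frontier Ω) (frontier Ω') with hr
  have hp0 : (0:ℝ) ≤ p := by linarith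
  have hD0 : (0:ℝ) ≤ D := le_trans diam_nonneg hΩD
  obtain ⟨hfne, hfsub⟩ := adm_facts hΩc hΩd
  obtain ⟨hfne', hfsub'⟩ := adm_facts hΩ'c hΩ'd
  have hE : EMetric.hausdorffEdist (frontier Ω) (frontier Ω') ≠ ⊤ :=
    Metric.hausdorffEdist_ne_top_of_nonempty_of_bounded hfne hfne'
      (hΩc.isBounded.subset hfsub) (hΩ'c.isBounded.subset hfsub')
  have hfc : Continuous f := (continuous_infDist_pt _).rpow_const fun x => Or.inr hp0
  have hgc : Continuous g := (continuous_infDist_pt _).rpow_const fun x => Or.inr hp0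
  have hmΩ : MeasurableSet Ω := hΩc.isClosed.measurableSet
  have hmΩ' : MeasurableSet Ω' := hΩ'c.isClosed.measurableSet
  have hfi : IntegrableOn f Ω μ := hfc.continuousOn.integrableOn_compact hΩc
  have hgi : IntegrableOn g Ω' μ := hgc.continuousOn.integrableOn_compact hΩ'c
  have hgi1 : IntegrableOn g (Ω' \ Ω) μ := hgi.mono_set diff_subset
  have hgi2 : IntegrableOn g (Ω ∩ Ω') μ := hgi.mono_set inter_subset_right
  have hfi1 : IntegrableOn f (Ω \ Ω') μ := hfi.mono_set diff_subset
  have hfi2 : IntegrableOn f (Ω ∩ Ω') μ := hfi.mono_set inter_subset_left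
  -- splits
  have hsplit' : ∫ x in Ω', g x ∂μ = (∫ x in Ω' \ Ω, g x ∂μ) + ∫ x in Ω ∩ Ω', g x ∂μ := by
    rw [← setIntegral_union ?_ (hmΩ.inter hmΩ') hgi1 hgi2]
    · rw [show Ω' \ Ω ∪ Ω ∩ Ω' = Ω' by rw [Set.inter_comm, Set.diff_union_inter]]
    · rw [Set.disjoint_left]
      rintro x ⟨-, hxn⟩ ⟨hxi, -⟩
      exact hxn hxi
  have hsplit : ∫ x in Ω, f x ∂μ = (∫ x in Ω \ Ω', f x ∂μ) + ∫ x in Ω ∩ Ω', f x ∂μ := by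
    rw [← setIntegral_union ?_ (hmΩ.inter hmΩ') hfi1 hfi2]
    · rw [Set.diff_union_inter]
    · rw [Set.disjoint_left]
      rintro x ⟨-, hxn⟩ ⟨-, hxi⟩
      exact hxn hxi
  have hkey : distInt p Ω' - distInt p Ω =
      (∫ x in Ω' \ Ω, g x ∂μ) - (∫ x in Ω \ Ω', f x ∂μ) +
        ∫ x in Ω ∩ Ω', (g x - f x) ∂μ := by
    rw [integral_sub hgi2 hfi2]
    show (∫ x in Ω', g x ∂μ) - (∫ x in Ω, f x ∂μ) = _
    rw [hsplit, hsplit']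
    ring
  -- measure finiteness
  have hμ1 : μ (Ω' \ Ω) < ⊤ := lt_of_le_of_lt (measure_mono diff_subset) hΩ'c.measure_lt_top
  have hμ2 : μ (Ω \ Ω') < ⊤ := lt_of_le_of_lt (measure_mono diff_subset) hΩc.measure_lt_top
  have hμ3 : μ (Ω ∩ Ω') < ⊤ := lt_of_le_of_lt (measure_mono inter_subset_left)
    hΩc.measure_lt_top
  -- bounds
  have hb1 : ‖∫ x in Ω' \ Ω, g x ∂μ‖ ≤ D ^ p * (μ (Ω' \ Ω)).toReal := by
    refine norm_setIntegral_le_of_norm_le_const hμ1 fun x hx => ?_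
    rw [Real.norm_eq_abs, abs_of_nonneg (Real.rpow_nonneg infDist_nonneg p)]
    exact Real.rpow_le_rpow infDist_nonneg (infDist_bdd hΩ'c hΩ'd hΩ'D hx.1) hp0
  have hb2 : ‖∫ x in Ω \ Ω', f x ∂μ‖ ≤ D ^ p * (μ (Ω \ Ω')).toReal := by
    refine norm_setIntegral_le_of_norm_le_const hμ2 fun x hx => ?_
    rw [Real.norm_eq_abs, abs_of_nonneg (Real.rpow_nonneg infDist_nonneg p)]
    exact Real.rpow_le_rpow infDist_nonneg (infDist_bdd hΩc hΩd hΩD hx.1) hp0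
  have hb3 : ‖∫ x in Ω ∩ Ω', (g x - f x) ∂μ‖ ≤
      (p * D ^ (p - 1) * r) * (μ (Ω ∩ Ω')).toReal := by
    refine norm_setIntegral_le_of_norm_le_const hμ3 fun x hx => ?_
    rw [Real.norm_eq_abs]
    have h1 : |infDist x (frontier Ω') - infDist x (frontier Ω)| ≤ r := by
      rw [abs_sub_le_iff]
      constructor
      · have := infDist_le_infDist_add_hausdorffDist (x := x) hE
        linarith
      · have hE' : EMetric.hausdorffEdist (frontier Ω') (frontier Ω) ≠ ⊤ := by
          rwa [EMetric.hausdorffEdist, Metric.hausdorffEDist_comm]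
        have := infDist_le_infDist_add_hausdorffDist (x := x) hE'
        rw [hausdorffDist_comm] at this
        linarith
    calc |g x - f x| ≤ p * D ^ (p - 1) *
          |infDist x (frontier Ω') - infDist x (frontier Ω)| :=
        mvt_rpow hp _ _ infDist_nonneg (infDist_bdd hΩc hΩd hΩD hx.1)
          infDist_nonneg (infDist_bdd hΩ'c hΩ'd hΩ'D hx.2)
      _ ≤ p * D ^ (p - 1) * r := by
          refine mul_le_mul_of_nonneg_left h1 ?_
          positivity
  calc |distInt p Ω' - distInt p Ω|
      ≤ ‖∫ x in Ω' \ Ω, g x ∂μ‖ + ‖∫ x in Ω \ Ω', f x ∂μ‖ +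
          ‖∫ x in Ω ∩ Ω', (g x - f x) ∂μ‖ := by
        rw [hkey]
        simpa [Real.norm_eq_abs, ← sub_eq_add_neg] using
          abs_add_three (∫ x in Ω' \ Ω, g x ∂μ) (-(∫ x in Ω \ Ω', f x ∂μ))
            (∫ x in Ω ∩ Ω', (g x - f x) ∂μ)
    _ ≤ D ^ p * (μ (Ω' \ Ω)).toReal + D ^ p * (μ (Ω \ Ω')).toReal +
          (p * D ^ (p - 1) * r) * (μ (Ω ∩ Ω')).toReal := by
        exact add_le_add (add_le_add hb1 hb2) hb3
    _ = (μ (Ω' \ Ω)).toReal * D ^ p + (μ (Ω \ Ω')).toReal * D ^ p +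
          (μ (Ω ∩ Ω')).toReal * r * p * D ^ (p - 1) := by ring

lemma part2 (p : ℝ) (hp : 1 ≤ p) (D : ℝ) (Ω : ℕ → Set Plane) (Ωlim : Set Plane)
    (hΩ : ∀ n, IsCompact (Ω n) ∧ Convex ℝ (Ω n) ∧ dimH (Ω n) = 2)
    (hLc : IsCompact Ωlim) (hLd : dimH Ωlim = 2)
    (hΩD : ∀ n, Metric.diam (Ω n) ≤ D) (hLD : Metric.diam Ωlim ≤ D)
    (hSD : Tendsto (fun n => μH[2] (symmDiff (Ω n) Ωlim)) atTop (𝓝 0))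
    (hHD : Tendsto (fun n => hausdorffDist (frontier (Ω n)) (frontier Ωlim)) atTop (𝓝 0)) :
    Tendsto (fun n => distInt p (Ω n)) atTop (𝓝 (distInt p Ωlim)) := by
  have hp0 : (0:ℝ) ≤ p := by linarith
  have hD0 : (0:ℝ) ≤ D := le_trans diam_nonneg hLD
  set μ : Measure Plane := μH[2] with hμ
  set C : ℝ := (μ Ωlim).toReal with hC
  -- three tendsto-zero pieces
  have h1 : Tendsto (fun n => (μ (Ω n \ Ωlim)).toReal) atTop (𝓝 0) := by
    have hle : ∀ n, μ (Ω n \ Ωlim) ≤ μ (symmDiff (Ω n) Ωlim) := fun n =>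
      measure_mono (by rw [Set.symmDiff_def]; exact subset_union_left)
    have := tendsto_of_tendsto_of_tendsto_of_le_of_le tendsto_const_nhds hSD
      (fun n => zero_le) hle
    simpa [Function.comp_def] using (ENNReal.tendsto_toReal (by simp)).comp this
  have h2 : Tendsto (fun n => (μ (Ωlim \ Ω n)).toReal) atTop (𝓝 0) := by
    have hle : ∀ n, μ (Ωlim \ Ω n) ≤ μ (symmDiff (Ω n) Ωlim) := fun n =>
      measure_mono (by rw [Set.symmDiff_def]; exact subset_union_right)
    have := tendsto_of_tendsto_of_tendsto_of_le_of_le tendsto_const_nhds hSD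
      (fun n => zero_le) hle
    simpa [Function.comp_def] using (ENNReal.tendsto_toReal (by simp)).comp this
  have h3 : Tendsto (fun n => (μ (Ωlim ∩ Ω n)).toReal *
      hausdorffDist (frontier Ωlim) (frontier (Ω n)) * p * D ^ (p - 1)) atTop (𝓝 0) := by
    have hr : ∀ n, hausdorffDist (frontier Ωlim) (frontier (Ω n)) =
        hausdorffDist (frontier (Ω n)) (frontier Ωlim) := fun n => hausdorffDist_comm
    refine squeeze_zero (fun n => ?_) (fun n => ?_)
      (g := fun n => C * hausdorffDist (frontier (Ω n)) (frontier Ωlim) * p * D ^ (p - 1)) ?_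
    · have := hausdorffDist_nonneg (s := frontier Ωlim) (t := frontier (Ω n))
      positivity
    · rw [hr]
      have hCn : (μ (Ωlim ∩ Ω n)).toReal ≤ C :=
        ENNReal.toReal_mono hLc.measure_lt_top.ne (measure_mono inter_subset_left)
      exact mul_le_mul_of_nonneg_right (mul_le_mul_of_nonneg_right
        (mul_le_mul_of_nonneg_right hCn hausdorffDist_nonneg) hp0)
        (Real.rpow_nonneg hD0 _)
    · simpa using ((hHD.const_mul C).mul_const p).mul_const (D ^ (p - 1))
  have hbnd : Tendsto (fun n => (μ (Ω n \ Ωlim)).toReal * D ^ p +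
      (μ (Ωlim \ Ω n)).toReal * D ^ p +
      (μ (Ωlim ∩ Ω n)).toReal * hausdorffDist (frontier Ωlim) (frontier (Ω n)) * p *
        D ^ (p - 1)) atTop (𝓝 0) := by
    simpa using ((h1.mul_const (D ^ p)).add (h2.mul_const (D ^ p))).add h3
  rw [tendsto_iff_dist_tendsto_zero]
  refine squeeze_zero (fun n => dist_nonneg) (fun n => ?_) hbnd
  rw [Real.dist_eq]
  exact part1 p hp D Ωlim (Ω n) hLc hLd (hΩ n).1 (hΩ n).2.2 hLD (hΩD n)

/-- quantitative continuity of the average-distance term with respect to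
symmetric-difference measure and Hausdorff distance of the boundaries, together with the
resulting convergence along sequences. -/
theorem stmt_12 (p : ℝ) (hp : 1 ≤ p) :
    (∀ (D : ℝ) (Ω Ω' : Set Plane),
      IsCompact Ω → Convex ℝ Ω → dimH Ω = 2 →
      IsCompact Ω' → Convex ℝ Ω' → dimH Ω' = 2 →
      Metric.diam Ω ≤ D → Metric.diam Ω' ≤ D →
      |distInt p Ω' - distInt p Ω| ≤
        (μH[2] (Ω' \ Ω)).toReal * D ^ p + (μH[2] (Ω \ Ω')).toReal * D ^ p +
          (μH[2] (Ω ∩ Ω')).toReal * hausdorffDist (frontier Ω) (frontier Ω') * p *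
            D ^ (p - 1)) ∧
    (∀ (D : ℝ) (Ω : ℕ → Set Plane) (Ωlim : Set Plane),
      (∀ n, IsCompact (Ω n) ∧ Convex ℝ (Ω n) ∧ dimH (Ω n) = 2) →
      IsCompact Ωlim → Convex ℝ Ωlim → dimH Ωlim = 2 →
      (∀ n, Metric.diam (Ω n) ≤ D) → Metric.diam Ωlim ≤ D →
      Tendsto (fun n => μH[2] (symmDiff (Ω n) Ωlim)) atTop (𝓝 0) →
      Tendsto (fun n => hausdorffDist (frontier (Ω n)) (frontier Ωlim)) atTop (𝓝 0) →
      Tendsto (fun n => distInt p (Ω n)) atTop (𝓝 (distInt p Ωlim))) := by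
  constructor
  · intro D Ω Ω' hΩc _ hΩd hΩ'c _ hΩ'd hΩD hΩ'D
    exact part1 p hp D Ω Ω' hΩc hΩd hΩ'c hΩ'd hΩD hΩ'D
  · intro D Ω Ωlim hΩ hLc _ hLd hΩD hLD hSD hHD
    exact part2 p hp D Ω Ωlim hΩ hLc hLd hΩD hLD hSD hHD
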